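/- Let d be an integer, n ≥ 1, and ε a complex number with complex conjugate ε̄. Consider the block-diagonal complex matrix B_M consisting of: one n×n tridiagonal block with diagonal entries -2d and off-diagonal entries d; n(n-1)/2 copies of the 2×2 block [[-2εε̄, -(ε+ε̄)], [-(ε+ε̄), -2]]; and n copies of the 2×2 block [[4εε̄, 2(ε+ε̄)], [2(ε+ε̄), 4]]. Then det B_M = (-d)^n · (n+1) · 4^n · (4εε̄ - (ε+ε̄)²)^{n(n+1)/2}. -/

import Mathlib

open Matrix

/-- Sizes of the blocks: one block of size `n` and `k + n` blocks of size `2`. -/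
def blkSize (n k : ℕ) : Fin 1 ⊕ Fin k ⊕ Fin n → Type
  | Sum.inl _ => Fin n
  | Sum.inr _ => Fin 2

instance blkSizeFintype (n k : ℕ) : ∀ i, Fintype (blkSize n k i)
  | Sum.inl _ => inferInstanceAs (Fintype (Fin n))
  | Sum.inr _ => inferInstanceAs (Fintype (Fin 2))

instance blkSizeDecEq (n k : ℕ) : ∀ i, DecidableEq (blkSize n k i)
  | Sum.inl _ => inferInstanceAs (DecidableEq (Fin n))
  | Sum.inr _ => inferInstanceAs (DecidableEq (Fin 2))

/-- The blocks of the Gram matrix `B_M`: one `n × n` tridiagonal block with diagonal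
entries `-2d` and off-diagonal entries `d`; `n(n-1)/2` copies of the block
`[[-2εε̄, -(ε+ε̄)], [-(ε+ε̄), -2]]`; and `n` copies of `[[4εε̄, 2(ε+ε̄)], [2(ε+ε̄), 4]]`. -/
noncomputable def BMblocks (d : ℤ) (n : ℕ) (ε : ℂ) :
    (i : Fin 1 ⊕ Fin (n * (n - 1) / 2) ⊕ Fin n) →
      Matrix (blkSize n (n * (n - 1) / 2) i) (blkSize n (n * (n - 1) / 2) i) ℂ
  | Sum.inl _ => Matrix.of fun i j : Fin n =>
      if i = j then -2 * (d : ℂ)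
      else if (i : ℕ) + 1 = (j : ℕ) ∨ (j : ℕ) + 1 = (i : ℕ) then (d : ℂ)
      else 0
  | Sum.inr (Sum.inl _) =>
      !![-2 * ε * (starRingEnd ℂ) ε, -(ε + (starRingEnd ℂ) ε);
         -(ε + (starRingEnd ℂ) ε), -2]
  | Sum.inr (Sum.inr _) =>
      !![4 * ε * (starRingEnd ℂ) ε, 2 * (ε + (starRingEnd ℂ) ε);
         2 * (ε + (starRingEnd ℂ) ε), 4]

def sigmaFiberEquiv {α : Type*} (m' : α → Type*) (a : α) :
    m' a ≃ {i : Σ a, m' a // i.fst = a} where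
  toFun x := ⟨⟨a, x⟩, rfl⟩
  invFun i := cast (congrArg m' i.2) i.1.2
  left_inv x := rfl
  right_inv := by rintro ⟨⟨a', x⟩, rfl⟩; rfl

theorem det_blockDiagonal'_univ {α : Type*} [Fintype α] [DecidableEq α]
    {m' : α → Type*} [∀ i, Fintype (m' i)] [∀ i, DecidableEq (m' i)]
    {R : Type*} [CommRing R] (M : ∀ i, Matrix (m' i) (m' i) R) :
    (Matrix.blockDiagonal' M).det = ∏ i, (M i).det := by
  letI : LinearOrder α := LinearOrder.lift' (Fintype.equivFin α) (Equiv.injective _)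
  rw [(Matrix.blockTriangular_blockDiagonal' M).det_fintype]
  refine Finset.prod_congr rfl fun a _ => ?_
  rw [← Matrix.det_submatrix_equiv_self (sigmaFiberEquiv m' a)]
  congr 1
  ext x y
  simp [Matrix.toSquareBlock_def, sigmaFiberEquiv]


noncomputable def tri (d : ℂ) (n : ℕ) : Matrix (Fin n) (Fin n) ℂ :=
  Matrix.of fun i j : Fin n =>
    if i = j then -2 * d
    else if (i : ℕ) + 1 = (j : ℕ) ∨ (j : ℕ) + 1 = (i : ℕ) then d
    else 0

lemma succAbove_one_succ (n : ℕ) (j : Fin n) :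
    Fin.succAbove (1 : Fin (n + 2)) j.succ = j.succ.succ :=
  Fin.succAbove_of_le_castSucc 1 j.succ (by
    simp [Fin.le_def])

lemma tri_det (d : ℂ) : ∀ n, (tri d n).det = (-d) ^ n * (n + 1)
  | 0 => by simp [tri]
  | 1 => by
      rw [show (1 : ℕ) = 0 + 1 from rfl, Matrix.det_fin_one]
      simp [tri]; ring
  | (n + 2) => by
      rw [Matrix.det_succ_row_zero, Fin.sum_univ_succ, Fin.sum_univ_succ]
      have h0 : (Finset.univ : Finset (Fin n)).sum (fun j =>
          (-1 : ℂ) ^ ((j.succ.succ : Fin (n+2)) : ℕ) * tri d (n + 2) 0 j.succ.succ *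
            ((tri d (n + 2)).submatrix Fin.succ (Fin.succAbove j.succ.succ)).det) = 0 := by
        apply Finset.sum_eq_zero
        intro j _
        have hz : tri d (n + 2) 0 j.succ.succ = 0 := by
          simp only [tri, Matrix.of_apply, Fin.ext_iff, Fin.val_succ]
          split_ifs <;> simp_all
        rw [hz]; ring
      rw [h0]
      have e00 : (tri d (n + 2)) 0 0 = -2 * d := by simp [tri]
      have e01 : (tri d (n + 2)) 0 1 = d := by
        simp only [tri, Matrix.of_apply, Fin.ext_iff]
        split_ifs <;> simp_all
      have m0 : (tri d (n + 2)).submatrix Fin.succ (Fin.succAbove 0) = tri d (n + 1) := by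
        rw [Fin.succAbove_zero]
        ext i j
        simp only [tri, Matrix.submatrix_apply, Matrix.of_apply, Fin.ext_iff, Fin.val_succ]
        split_ifs <;> first | rfl | omega
      have m1 : ((tri d (n + 2)).submatrix Fin.succ (Fin.succAbove 1)).det
          = d * (tri d n).det := by
        rw [Matrix.det_succ_column_zero, Fin.sum_univ_succ]
        have h1 : (Finset.univ : Finset (Fin n)).sum (fun i =>
            (-1 : ℂ) ^ ((i.succ : Fin (n+1)) : ℕ) *
              ((tri d (n + 2)).submatrix Fin.succ (Fin.succAbove 1)) i.succ 0 *
              (((tri d (n + 2)).submatrix Fin.succ (Fin.succAbove 1)).submatrix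
                i.succ.succAbove Fin.succ).det) = 0 := by
          apply Finset.sum_eq_zero
          intro i _
          have h : Fin.succAbove (1 : Fin (n+2)) 0 = 0 := rfl
          have hz : ((tri d (n + 2)).submatrix Fin.succ (Fin.succAbove 1)) i.succ 0 = 0 := by
            simp only [Matrix.submatrix_apply, h]
            simp only [tri, Matrix.of_apply, Fin.ext_iff, Fin.val_succ, Fin.val_zero]
            split_ifs <;> simp_all
          rw [hz]; ring
        rw [h1, add_zero]
        have ha : ((tri d (n + 2)).submatrix Fin.succ (Fin.succAbove 1)) 0 0 = d := by
          have h : Fin.succAbove (1 : Fin (n+2)) 0 = 0 := rfl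
          simp only [Matrix.submatrix_apply, h]
          simp only [tri, Matrix.of_apply, Fin.ext_iff, Fin.val_succ, Fin.val_zero]
          split_ifs <;> simp_all
        have hb : (((tri d (n + 2)).submatrix Fin.succ (Fin.succAbove 1)).submatrix
            (Fin.succAbove 0) Fin.succ) = tri d n := by
          ext i j
          simp only [Matrix.submatrix_apply, Fin.succAbove_zero, succAbove_one_succ]
          simp only [tri, Matrix.of_apply, Fin.ext_iff, Fin.val_succ]
          split_ifs <;> first | rfl | omega
        rw [hb, ha]
        simp
      simp only [Fin.succ_zero_eq_one] at *
      rw [m0, m1, e00, e01, tri_det d (n+1), tri_det d n]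
      push_cast
      ring_nf
      rw [show ((0 : Fin (n+2)) : ℕ) = 0 from rfl, show ((1 : Fin (n+2)) : ℕ) = 1 from rfl]
      ring


/-- The determinant of the block-diagonal Gram matrix `B_M` equals
`(-d)^n · (n+1) · 4^n · (4εε̄ - (ε+ε̄)²)^{n(n+1)/2}`. -/
theorem det_BM (d : ℤ) (n : ℕ) (hn : 1 ≤ n) (ε : ℂ) :
    (Matrix.blockDiagonal' (BMblocks d n ε)).det
      = (-(d : ℂ)) ^ n * (n + 1) * 4 ^ n *
        (4 * ε * (starRingEnd ℂ) ε - (ε + (starRingEnd ℂ) ε) ^ 2) ^ (n * (n + 1) / 2) := by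
  set D : ℂ := 4 * ε * (starRingEnd ℂ) ε - (ε + (starRingEnd ℂ) ε) ^ 2 with hD
  rw [det_blockDiagonal'_univ, Fintype.prod_sum_type, Fintype.prod_sum_type]
  have hA : ∀ i : Fin 1, (BMblocks d n ε (Sum.inl i)).det = (-(d : ℂ)) ^ n * (n + 1) := by
    intro i
    have h : BMblocks d n ε (Sum.inl i) = tri (d : ℂ) n := rfl
    rw [h]; exact tri_det _ n
  have hB : ∀ i : Fin (n * (n - 1) / 2), (BMblocks d n ε (Sum.inr (Sum.inl i))).det = D := by
    intro i
    have h : BMblocks d n ε (Sum.inr (Sum.inl i)) =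
        !![-2 * ε * (starRingEnd ℂ) ε, -(ε + (starRingEnd ℂ) ε);
           -(ε + (starRingEnd ℂ) ε), -2] := rfl
    rw [h]; refine (Matrix.det_fin_two_of _ _ _ _).trans ?_; rw [hD]; ring
  have hC : ∀ i : Fin n, (BMblocks d n ε (Sum.inr (Sum.inr i))).det = 4 * D := by
    intro i
    have h : BMblocks d n ε (Sum.inr (Sum.inr i)) =
        !![4 * ε * (starRingEnd ℂ) ε, 2 * (ε + (starRingEnd ℂ) ε);
           2 * (ε + (starRingEnd ℂ) ε), 4] := rfl
    rw [h]; refine (Matrix.det_fin_two_of _ _ _ _).trans ?_; rw [hD]; ring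
  simp only [hA, hB, hC, Finset.prod_const, Finset.card_univ, Fintype.card_fin, pow_one]
  have hk : n * (n - 1) / 2 + n = n * (n + 1) / 2 := by
    have h2 : n * (n + 1) = n * (n - 1) + 2 * n := by
      cases n with
      | zero => rfl
      | succ m => simp only [Nat.succ_sub_one]; ring
    rw [h2, Nat.add_mul_div_left _ _ (by norm_num : 0 < 2)]
  have key : D ^ (n * (n - 1) / 2) * (4 * D) ^ n = 4 ^ n * D ^ (n * (n + 1) / 2) := by
    rw [mul_pow, ← hk, pow_add]; ring
  rw [key]; ring
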